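/- The map t ↦ -log Z(t) is concave on [0,1] and vanishes at the endpoints t = 0 and t = 1. -/

import Mathlib

open Finset Real

private lemma Z_holder {α : Type*} [Fintype α] (p q : α → ℝ)
    (hp : ∀ x, 0 < p x) (hq : ∀ x, 0 < q x) (s u a b : ℝ)
    (ha : 0 < a) (hb : 0 < b) (hab : a + b = 1) :
    (∑ x, p x ^ (a * s + b * u) * q x ^ (1 - (a * s + b * u)))
      ≤ (∑ x, p x ^ s * q x ^ (1 - s)) ^ a * (∑ x, p x ^ u * q x ^ (1 - u)) ^ b := by
  have hconj : Real.HolderConjugate (1 / a) (1 / b) := by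
    rw [Real.holderConjugate_iff]; constructor
    · rw [lt_div_iff₀ ha, one_mul]; linarith
    · simpa using hab
  have habs : ∀ (F : α → ℝ) (hF : ∀ x, 0 < F x) (c : ℝ) (hc : 0 < c) (x : α),
      |(F x) ^ c| ^ (1 / c) = F x := by
    intro F hF c hc x
    rw [abs_of_nonneg (Real.rpow_nonneg (hF x).le _), ← Real.rpow_mul (hF x).le,
      mul_one_div_cancel hc.ne', Real.rpow_one]
  have key := Real.inner_le_Lp_mul_Lq Finset.univ
      (fun x => (p x ^ s * q x ^ (1 - s)) ^ a)
      (fun x => (p x ^ u * q x ^ (1 - u)) ^ b) hconj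
  simp only [habs (fun x => p x ^ s * q x ^ (1 - s))
      (fun x => mul_pos (Real.rpow_pos_of_pos (hp x) _) (Real.rpow_pos_of_pos (hq x) _)) a ha,
    habs (fun x => p x ^ u * q x ^ (1 - u))
      (fun x => mul_pos (Real.rpow_pos_of_pos (hp x) _) (Real.rpow_pos_of_pos (hq x) _)) b hb,
    one_div_one_div] at key
  refine le_trans (le_of_eq ?_) key
  apply Finset.sum_congr rfl
  intro x _
  have hps := (Real.rpow_pos_of_pos (hp x) s).le
  have hqs := (Real.rpow_pos_of_pos (hq x) (1 - s)).le
  have hpu := (Real.rpow_pos_of_pos (hp x) u).le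
  have hqu := (Real.rpow_pos_of_pos (hq x) (1 - u)).le
  rw [Real.mul_rpow hps hqs, Real.mul_rpow hpu hqu,
    ← Real.rpow_mul (hp x).le, ← Real.rpow_mul (hq x).le,
    ← Real.rpow_mul (hp x).le, ← Real.rpow_mul (hq x).le,
    mul_mul_mul_comm, ← Real.rpow_add (hp x), ← Real.rpow_add (hq x)]
  congr 2 <;> ring_nf <;> nlinarith

theorem neg_log_Z_concave_and_endpoints
    {α : Type*} [Fintype α] (p q : α → ℝ)
    (hp : ∀ x, 0 < p x) (hq : ∀ x, 0 < q x)
    (hps : ∑ x, p x = 1) (hqs : ∑ x, q x = 1) :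
    (∑ x, p x ^ (0 : ℝ) * q x ^ (1 - (0 : ℝ))) = 1 ∧
    (∑ x, p x ^ (1 : ℝ) * q x ^ (1 - (1 : ℝ))) = 1 ∧
    ConcaveOn ℝ (Set.Icc (0 : ℝ) 1)
      (fun t : ℝ => -Real.log (∑ x, p x ^ t * q x ^ (1 - t))) := by
  have hne : Nonempty α := by
    by_contra h
    rw [not_nonempty_iff] at h
    rw [Finset.univ_eq_empty, Finset.sum_empty] at hps
    norm_num at hps
  have hZpos : ∀ t : ℝ, 0 < ∑ x, p x ^ t * q x ^ (1 - t) := fun t =>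
    Finset.sum_pos (fun x _ => mul_pos (Real.rpow_pos_of_pos (hp x) _)
      (Real.rpow_pos_of_pos (hq x) _)) Finset.univ_nonempty
  refine ⟨by simp [hqs], by simp [hps], ?_⟩
  have hconv : ConvexOn ℝ (Set.Icc (0:ℝ) 1)
      (fun t : ℝ => Real.log (∑ x, p x ^ t * q x ^ (1 - t))) := by
    refine ⟨convex_Icc 0 1, ?_⟩
    intro s hs u hu a b ha hb hab
    rcases eq_or_lt_of_le ha with ha0 | ha0
    · simp [← ha0, show b = 1 by linarith]
    rcases eq_or_lt_of_le hb with hb0 | hb0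
    · simp [← hb0, show a = 1 by linarith]
    have key := Z_holder p q hp hq s u a b ha0 hb0 hab
    simp only [smul_eq_mul]
    calc Real.log (∑ x, p x ^ (a * s + b * u) * q x ^ (1 - (a * s + b * u)))
        ≤ Real.log ((∑ x, p x ^ s * q x ^ (1 - s)) ^ a
            * (∑ x, p x ^ u * q x ^ (1 - u)) ^ b) :=
          Real.log_le_log (hZpos _) key
      _ = a * Real.log (∑ x, p x ^ s * q x ^ (1 - s))
            + b * Real.log (∑ x, p x ^ u * q x ^ (1 - u)) := by
          rw [Real.log_mul (Real.rpow_pos_of_pos (hZpos s) a).ne'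
              (Real.rpow_pos_of_pos (hZpos u) b).ne',
            Real.log_rpow (hZpos s), Real.log_rpow (hZpos u)]
  exact hconv.neg
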